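/- For the star K_{1,n−1} with n ≥ 3 vertices, the middle 3-rainbow domination number is γ*_{r3}(K_{1,n−1}) = n + 1. -/

import Mathlib

open SimpleGraph Finset

/-- A `k`-rainbow dominating function on a graph `H`. -/
def IsRDF {W : Type*} (H : SimpleGraph W) (k : ℕ) (f : W → Finset (Fin k)) : Prop :=
  ∀ w, f w = ∅ → ∀ c : Fin k, ∃ u, H.Adj w u ∧ c ∈ f u

/-- The weight of a rainbow dominating function. -/
noncomputable def rdfWeight {W : Type*} [Fintype W] {k : ℕ} (f : W → Finset (Fin k)) : ℕ :=
  ∑ w, (f w).card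

/-- The `k`-rainbow domination number of a graph. -/
noncomputable def rdn {W : Type*} [Fintype W] (H : SimpleGraph W) (k : ℕ) : ℕ :=
  sInf {n | ∃ f : W → Finset (Fin k), IsRDF H k f ∧ rdfWeight f = n}

/-- The middle graph of `G`, on vertex set `V(G) ⊕ E(G)`. -/
def middleGraph {V : Type*} (G : SimpleGraph V) : SimpleGraph (V ⊕ G.edgeSet) where
  Adj x y :=
    match x, y with
    | Sum.inl _, Sum.inl _ => False
    | Sum.inl v, Sum.inr e => v ∈ (e : Sym2 V)
    | Sum.inr e, Sum.inl v => v ∈ (e : Sym2 V)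
    | Sum.inr e, Sum.inr f => e ≠ f ∧ ∃ v, v ∈ (e : Sym2 V) ∧ v ∈ (f : Sym2 V)
  symm := ⟨by
    rintro (v | e) (w | f) h
    · exact h.elim
    · exact h
    · exact h
    · exact ⟨Ne.symm h.1, h.2.imp fun v hv => ⟨hv.2, hv.1⟩⟩⟩
  loopless := ⟨by
    rintro (v | e) h
    · exact h.elim
    · exact h.1 rfl⟩

/-- The middle `k`-rainbow domination number `γ*_{rk}(G)`. -/
noncomputable def mrdn {V : Type*} [Fintype V] (G : SimpleGraph V) (k : ℕ) : ℕ :=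
  letI := Classical.decEq V
  letI : DecidableRel G.Adj := fun _ _ => Classical.dec _
  rdn (middleGraph G) k

/-- The `k`-rainbow domatic number: the maximum size of a family of `k`-rainbow
dominating functions with `∑ i |f i v| ≤ k` for each vertex `v`. -/
noncomputable def rdomatic {W : Type*} (H : SimpleGraph W) (k : ℕ) : ℕ :=
  sSup {d | ∃ F : Fin d → W → Finset (Fin k), Function.Injective F ∧
    (∀ i, IsRDF H k (F i)) ∧ ∀ w, (∑ i, (F i w).card) ≤ k}

/-- The matching number `α'(G)`. -/
noncomputable def matchingNumber {V : Type*} [Fintype V] (G : SimpleGraph V) : ℕ :=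
  sSup {n | ∃ M : Finset (Sym2 V), ↑M ⊆ G.edgeSet ∧
    (∀ e ∈ M, ∀ f ∈ M, e ≠ f → ∀ v : V, ¬(v ∈ e ∧ v ∈ f)) ∧ M.card = n}

/-- The star `K_{1,m}` on `m+1` vertices, with center `0`. -/
def starGraph (m : ℕ) : SimpleGraph (Fin (m + 1)) :=
  fromEdgeSet {e | ∃ i : Fin (m + 1), e = s(0, i)}

namespace Star16

variable {m : ℕ}

lemma star_edgeSet (m : ℕ) :
    (_root_.starGraph m).edgeSet = {e | ∃ i : Fin (m+1), i ≠ 0 ∧ e = s(0, i)} := by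
  ext e
  rw [_root_.starGraph, edgeSet_fromEdgeSet]
  constructor
  · rintro ⟨⟨i, rfl⟩, hd⟩
    refine ⟨i, ?_, rfl⟩
    rintro rfl
    exact hd (Sym2.mk_isDiag_iff.mpr rfl)
  · rintro ⟨i, hi, rfl⟩
    exact ⟨⟨i, rfl⟩, fun hd => hi (Sym2.mk_isDiag_iff.mp hd).symm⟩

lemma mem_star_edgeSet {e : Sym2 (Fin (m+1))} :
    e ∈ (_root_.starGraph m).edgeSet ↔ ∃ i : Fin (m+1), i ≠ 0 ∧ e = s(0, i) := by
  rw [star_edgeSet]; rfl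

/-- the edge `s(0,i)` as an element of the edge set -/
def eps (i : {i : Fin (m+1) // i ≠ 0}) : (_root_.starGraph m).edgeSet :=
  ⟨s(0, i.1), mem_star_edgeSet.mpr ⟨i.1, i.2, rfl⟩⟩

noncomputable def eEquiv (m : ℕ) : {i : Fin (m+1) // i ≠ 0} ≃ (_root_.starGraph m).edgeSet where
  toFun := eps
  invFun e := ⟨(mem_star_edgeSet.mp e.2).choose, (mem_star_edgeSet.mp e.2).choose_spec.1⟩
  left_inv i := by
    have h := (mem_star_edgeSet.mp (eps i).2).choose_spec.2
    have h2 : (mem_star_edgeSet.mp (eps i).2).choose = i.1 := by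
      have := Sym2.eq_iff.mp h
      rcases this with ⟨-, h⟩ | ⟨h1, h2⟩
      · exact h.symm
      · exact absurd h2.symm (fun h => i.2 h.symm)
    exact Subtype.ext h2
  right_inv e := by
    have h := (mem_star_edgeSet.mp e.2).choose_spec.2
    exact Subtype.ext h.symm

end Star16

namespace Star16

variable {m : ℕ}

lemma zero_mem_edge (e : (_root_.starGraph m).edgeSet) : (0 : Fin (m+1)) ∈ (e : Sym2 (Fin (m+1))) := by
  obtain ⟨i, hi, he⟩ := mem_star_edgeSet.mp e.2
  rw [he]; exact Sym2.mem_mk_left _ _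

lemma adj_inl_inr {v : Fin (m+1)} {e : (_root_.starGraph m).edgeSet} :
    (middleGraph (_root_.starGraph m)).Adj (Sum.inl v) (Sum.inr e) ↔ v ∈ (e : Sym2 (Fin (m+1))) :=
  Iff.rfl

lemma eps_inj {i j : {i : Fin (m+1) // i ≠ 0}} (h : eps i = eps j) : i = j := by
  have h2 := Subtype.ext_iff.mp h
  rcases Sym2.eq_iff.mp h2 with ⟨-, h⟩ | ⟨h1, h2⟩
  · exact Subtype.ext h
  · exact absurd h1.symm j.2

/-- the unique neighbor of a leaf -/
lemma leaf_nbr {i : Fin (m+1)} (hi : i ≠ 0) {u : Fin (m+1) ⊕ (_root_.starGraph m).edgeSet}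
    (h : (middleGraph (_root_.starGraph m)).Adj (Sum.inl i) u) : u = Sum.inr (eps ⟨i, hi⟩) := by
  rcases u with w | e
  · exact h.elim
  · have hmem : i ∈ (e : Sym2 (Fin (m+1))) := h
    obtain ⟨j, hj, he⟩ := mem_star_edgeSet.mp e.2
    rw [he, Sym2.mem_iff] at hmem
    rcases hmem with h0 | hij
    · exact absurd h0 hi
    · have : e = eps ⟨i, hi⟩ := Subtype.ext (he.trans (congrArg (fun t => s(0, t)) hij.symm))
      rw [this]

lemma nbr_inl_zero {u : Fin (m+1) ⊕ (_root_.starGraph m).edgeSet}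
    (h : (middleGraph (_root_.starGraph m)).Adj (Sum.inl 0) u) :
    ∃ e : (_root_.starGraph m).edgeSet, u = Sum.inr e := by
  rcases u with w | e
  · exact h.elim
  · exact ⟨e, rfl⟩

lemma two_le_sum {α : Type*} [Fintype α] [DecidableEq α] (g : α → Finset (Fin 3))
    (h0 : ∃ a, (0 : Fin 3) ∈ g a) (h1 : ∃ a, (1 : Fin 3) ∈ g a) :
    2 ≤ ∑ a, (g a).card := by
  obtain ⟨a, ha⟩ := h0
  obtain ⟨b, hb⟩ := h1
  by_cases hab : a = b
  · subst hab
    have hsub : ({0, 1} : Finset (Fin 3)) ⊆ g a := by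
      intro c hc
      simp only [Finset.mem_insert, Finset.mem_singleton] at hc
      rcases hc with rfl | rfl
      · exact ha
      · exact hb
    have h2 : 2 ≤ (g a).card := by
      calc 2 = ({0, 1} : Finset (Fin 3)).card := by decide
      _ ≤ (g a).card := Finset.card_le_card hsub
    exact le_trans h2 (Finset.single_le_sum (f := fun a => (g a).card) (fun _ _ => Nat.zero_le _) (Finset.mem_univ a))
  · have h2 : (g a).card + (g b).card ≤ ∑ x, (g x).card := by
      rw [← Finset.sum_pair (f := fun x => (g x).card) hab]
      exact Finset.sum_le_sum_of_subset (Finset.subset_univ _)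
    have ha1 : 1 ≤ (g a).card := Finset.card_pos.mpr ⟨0, ha⟩
    have hb1 : 1 ≤ (g b).card := Finset.card_pos.mpr ⟨1, hb⟩
    omega

section WithFintype

variable [Fintype ((_root_.starGraph m).edgeSet)]

omit [Fintype ((_root_.starGraph m).edgeSet)] in
lemma card_subtype_ne : Fintype.card {i : Fin (m+1) // i ≠ 0} = m := by
  simp [Fintype.card_subtype_compl]

lemma weight_eq (f : (Fin (m+1) ⊕ (_root_.starGraph m).edgeSet) → Finset (Fin 3)) :
    rdfWeight f = (f (Sum.inl 0)).card +
      ∑ i : {i : Fin (m+1) // i ≠ 0}, ((f (Sum.inl i.1)).card + (f (Sum.inr (eps i))).card) := by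
  rw [rdfWeight, Fintype.sum_sum_type]
  have h1 : ∑ v : Fin (m+1), (f (Sum.inl v)).card
      = (f (Sum.inl 0)).card + ∑ i : {i : Fin (m+1) // i ≠ 0}, (f (Sum.inl i.1)).card := by
    rw [← Finset.add_sum_erase Finset.univ _ (Finset.mem_univ 0)]
    congr 1
    rw [Finset.sum_subtype (p := fun i => i ≠ 0) (Finset.univ.erase 0) (fun x => by simp) (fun v => (f (Sum.inl v)).card)]
  have h2 : ∑ e : (_root_.starGraph m).edgeSet, (f (Sum.inr e)).card
      = ∑ i : {i : Fin (m+1) // i ≠ 0}, (f (Sum.inr (eps i))).card := by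
    exact (Fintype.sum_equiv (eEquiv m) _ _ (fun i => rfl)).symm
  rw [h1, h2, Finset.sum_add_distrib]
  ring

end WithFintype

end Star16

namespace Star16

variable {m : ℕ} [Fintype ((_root_.starGraph m).edgeSet)]

lemma upper (hm : 2 ≤ m) :
    ∃ f : (Fin (m+1) ⊕ (_root_.starGraph m).edgeSet) → Finset (Fin 3),
      IsRDF (middleGraph (_root_.starGraph m)) 3 f ∧ rdfWeight f = m + 2 := by
  classical
  have hx1 : (1 : ℕ) < m + 1 := by omega
  set x : {i : Fin (m+1) // i ≠ 0} := ⟨⟨1, hx1⟩, by simp [Fin.ext_iff]⟩ with hxdef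
  refine ⟨fun w => match w with
    | Sum.inl v => if v = 0 ∨ v = x.1 then ∅ else {0}
    | Sum.inr e => if e = eps x then Finset.univ else ∅, ?_, ?_⟩
  · intro w hw c
    rcases w with v | e
    · simp only at hw
      by_cases hv : v = 0 ∨ v = x.1
      · refine ⟨Sum.inr (eps x), ?_, ?_⟩
        · show v ∈ (eps x : Sym2 (Fin (m+1)))
          rcases hv with rfl | rfl
          · exact Sym2.mem_mk_left _ _
          · exact Sym2.mem_mk_right _ _
        · show c ∈ (if eps x = eps x then (Finset.univ : Finset (Fin 3)) else ∅)
          rw [if_pos rfl]; exact Finset.mem_univ c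
      · rw [if_neg hv] at hw
        exact absurd hw (Finset.singleton_ne_empty 0)
    · change (if e = eps x then (Finset.univ : Finset (Fin 3)) else ∅) = ∅ at hw
      by_cases he : e = eps x
      · rw [if_pos he] at hw
        exact absurd hw Finset.univ_nonempty.ne_empty
      · refine ⟨Sum.inr (eps x), ⟨he, 0, zero_mem_edge e, zero_mem_edge (eps x)⟩, ?_⟩
        show c ∈ (if eps x = eps x then (Finset.univ : Finset (Fin 3)) else ∅)
        rw [if_pos rfl]; exact Finset.mem_univ c
  · rw [weight_eq]
    have h0 : ((if (0 : Fin (m+1)) = 0 ∨ (0 : Fin (m+1)) = x.1 then (∅ : Finset (Fin 3)) else {0})).card = 0 := by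
      simp
    simp only [h0]
    have hterm : ∀ i : {i : Fin (m+1) // i ≠ 0},
        ((if i.1 = 0 ∨ i.1 = x.1 then (∅ : Finset (Fin 3)) else {0})).card +
        ((if eps i = eps x then (Finset.univ : Finset (Fin 3)) else ∅)).card
        = if i = x then 3 else 1 := by
      intro i
      by_cases hix : i = x
      · subst hix
        simp
      · have hc1 : ¬(i.1 = 0 ∨ i.1 = x.1) := by
          rintro (h | h)
          · exact i.2 h
          · exact hix (Subtype.ext h)
        have hc2 : ¬(eps i = eps x) := fun h => hix (eps_inj h)
        rw [if_neg hc1, if_neg hc2, if_neg hix]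
        simp
    rw [Finset.sum_congr rfl (fun i _ => hterm i)]
    have hsplit : ∀ i : {i : Fin (m+1) // i ≠ 0},
        (if i = x then 3 else 1) = 1 + (if i = x then 2 else 0) := by
      intro i; split <;> rfl
    rw [Finset.sum_congr rfl (fun i _ => hsplit i), Finset.sum_add_distrib]
    simp [Finset.sum_ite_eq', card_subtype_ne]

end Star16

namespace Star16

variable {m : ℕ} [Fintype ((_root_.starGraph m).edgeSet)]

lemma lower (hm : 2 ≤ m) (f : (Fin (m+1) ⊕ (_root_.starGraph m).edgeSet) → Finset (Fin 3))
    (hf : IsRDF (middleGraph (_root_.starGraph m)) 3 f) : m + 2 ≤ rdfWeight f := by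
  classical
  have hx1 : (1 : ℕ) < m + 1 := by omega
  set x : {i : Fin (m+1) // i ≠ 0} := ⟨⟨1, hx1⟩, by simp [Fin.ext_iff]⟩ with hxdef
  set g : {i : Fin (m+1) // i ≠ 0} → ℕ :=
    fun j => (f (Sum.inl j.1)).card + (f (Sum.inr (eps j))).card with hgdef
  have key : ∀ i : {i : Fin (m+1) // i ≠ 0}, f (Sum.inl i.1) = ∅ →
      f (Sum.inr (eps i)) = Finset.univ := by
    intro i hi
    apply Finset.eq_univ_iff_forall.mpr
    intro c
    obtain ⟨u, hu, hc⟩ := hf _ hi c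
    rwa [leaf_nbr i.2 hu] at hc
  have pair1 : ∀ i : {i : Fin (m+1) // i ≠ 0}, 1 ≤ g i := by
    intro i
    by_cases hi : f (Sum.inl i.1) = ∅
    · have := key i hi
      simp [hgdef, this]
    · have := Finset.card_pos.mpr (Finset.nonempty_iff_ne_empty.mpr hi)
      simp only [hgdef]
      omega
  rw [weight_eq]
  rw [show (∑ i : {i : Fin (m+1) // i ≠ 0},
      ((f (Sum.inl i.1)).card + (f (Sum.inr (eps i))).card)) = ∑ j, g j from rfl]
  by_cases hA : ∃ i : {i : Fin (m+1) // i ≠ 0}, f (Sum.inl i.1) = ∅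
  · obtain ⟨i, hi⟩ := hA
    have h3 : g i = 3 := by
      simp [hgdef, hi, key i hi]
    have hsum : ∑ j, g j = g i + ∑ j ∈ Finset.univ.erase i, g j :=
      (Finset.add_sum_erase _ _ (Finset.mem_univ i)).symm
    have hcard : (Finset.univ.erase i).card = m - 1 := by
      rw [Finset.card_erase_of_mem (Finset.mem_univ i), Finset.card_univ, card_subtype_ne]
    have hrest : (Finset.univ.erase i).card • 1 ≤ ∑ j ∈ Finset.univ.erase i, g j :=
      Finset.card_nsmul_le_sum _ _ _ (fun j _ => pair1 j)
    rw [smul_eq_mul, mul_one, hcard] at hrest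
    omega
  · push_neg at hA
    have ha1 : ∀ i : {i : Fin (m+1) // i ≠ 0}, 1 ≤ (f (Sum.inl i.1)).card :=
      fun i => Finset.card_pos.mpr (hA i)
    simp only [hgdef, Finset.sum_add_distrib]
    set A := ∑ i : {i : Fin (m+1) // i ≠ 0}, (f (Sum.inl i.1)).card with hAdef
    set E := ∑ i : {i : Fin (m+1) // i ≠ 0}, (f (Sum.inr (eps i))).card with hEdef
    have hAm : m ≤ A := by
      have h := Finset.card_nsmul_le_sum Finset.univ
        (fun i : {i : Fin (m+1) // i ≠ 0} => (f (Sum.inl i.1)).card) 1 (fun j _ => ha1 j)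
      rwa [smul_eq_mul, mul_one, Finset.card_univ, card_subtype_ne] at h
    have hc0 : E ≤ 1 → 1 ≤ (f (Sum.inl 0)).card := by
      intro hE
      rcases Finset.eq_empty_or_nonempty (f (Sum.inl 0)) with h0 | h0
      · exfalso
        have h2 : 2 ≤ E := by
          apply two_le_sum
          · obtain ⟨u, hu, hc⟩ := hf _ h0 0
            obtain ⟨e, rfl⟩ := nbr_inl_zero hu
            exact ⟨(eEquiv m).symm e, by
              rwa [show eps ((eEquiv m).symm e) = e from (eEquiv m).apply_symm_apply e]⟩
          · obtain ⟨u, hu, hc⟩ := hf _ h0 1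
            obtain ⟨e, rfl⟩ := nbr_inl_zero hu
            exact ⟨(eEquiv m).symm e, by
              rwa [show eps ((eEquiv m).symm e) = e from (eEquiv m).apply_symm_apply e]⟩
        omega
      · exact Finset.card_pos.mpr h0
    by_cases hE2 : 2 ≤ E
    · omega
    · push_neg at hE2
      have hc0' : 1 ≤ (f (Sum.inl 0)).card := hc0 (by omega)
      by_cases hE1 : E = 0
      · have hempty : ∀ i : {i : Fin (m+1) // i ≠ 0}, f (Sum.inr (eps i)) = ∅ := by
          intro i
          apply Finset.card_eq_zero.mp
          have hE0 : ∑ i : {i : Fin (m+1) // i ≠ 0}, (f (Sum.inr (eps i))).card = 0 := by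
            rw [← hEdef]; exact hE1
          exact Finset.sum_eq_zero_iff.mp hE0 i (Finset.mem_univ i)
        have hx3 : 3 ≤ (f (Sum.inl 0)).card + (f (Sum.inl x.1)).card := by
          have hsub : (Finset.univ : Finset (Fin 3)) ⊆ f (Sum.inl 0) ∪ f (Sum.inl x.1) := by
            intro c _
            obtain ⟨u, hu, hc⟩ := hf (Sum.inr (eps x)) (hempty x) c
            rcases u with v | e'
            · have hv : v = 0 ∨ v = x.1 := Sym2.mem_iff.mp hu
              rcases hv with rfl | rfl
              · exact Finset.mem_union_left _ hc
              · exact Finset.mem_union_right _ hc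
            · exfalso
              have he' : e' = eps ((eEquiv m).symm e') := ((eEquiv m).apply_symm_apply e').symm
              rw [he', hempty _] at hc
              exact Finset.notMem_empty c hc
          calc 3 = (Finset.univ : Finset (Fin 3)).card := by decide
          _ ≤ (f (Sum.inl 0) ∪ f (Sum.inl x.1)).card := Finset.card_le_card hsub
          _ ≤ _ := Finset.card_union_le _ _
        have hAx : (f (Sum.inl x.1)).card + (m - 1) ≤ A := by
          have hsum : A = (f (Sum.inl x.1)).card +
              ∑ j ∈ Finset.univ.erase x, (f (Sum.inl j.1)).card :=
            (Finset.add_sum_erase _ _ (Finset.mem_univ x)).symm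
          have hcard : (Finset.univ.erase x).card = m - 1 := by
            rw [Finset.card_erase_of_mem (Finset.mem_univ x), Finset.card_univ, card_subtype_ne]
          have hrest : (Finset.univ.erase x).card • 1 ≤
              ∑ j ∈ Finset.univ.erase x, (f (Sum.inl j.1)).card :=
            Finset.card_nsmul_le_sum _ _ _ (fun j _ => ha1 j)
          rw [smul_eq_mul, mul_one, hcard] at hrest
          omega
        omega
      · omega

end Star16

namespace Star16

lemma rdn_congr {W : Type*} (i1 i2 : Fintype W) (H : SimpleGraph W) (k : ℕ) :
    @rdn W i1 H k = @rdn W i2 H k := by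
  cases Subsingleton.elim i1 i2; rfl

lemma rdn_star (m : ℕ) (hm : 2 ≤ m) [Fintype ((_root_.starGraph m).edgeSet)] :
    rdn (middleGraph (_root_.starGraph m)) 3 = m + 2 := by
  obtain ⟨f, hf, hw⟩ := upper hm
  unfold rdn
  apply le_antisymm
  · exact Nat.sInf_le ⟨f, hf, hw⟩
  · exact le_csInf ⟨m + 2, f, hf, hw⟩ (by rintro b ⟨g, hg, rfl⟩; exact lower hm g hg)

end Star16


/-- For the star `K_{1,n−1}` with `n ≥ 3` vertices, `γ*_{r3} = n + 1`. -/
theorem stmt16 (n : ℕ) (hn : 3 ≤ n) :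
    mrdn (_root_.starGraph (n - 1)) 3 = n + 1 := by
  have hm : 2 ≤ n - 1 := by omega
  unfold mrdn
  letI : Fintype ((_root_.starGraph (n - 1)).edgeSet) := Fintype.ofFinite _
  have h : rdn (middleGraph (_root_.starGraph (n - 1))) 3 = (n - 1) + 2 :=
    Star16.rdn_star (n - 1) hm
  rw [show n + 1 = (n - 1) + 2 by omega]
  exact (Star16.rdn_congr _ _ _ _).trans h
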